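/- arXiv:2408.03187 — 3 statements merged into one kernel-verified Lean document; each statement's English description precedes it below -/
import Mathlib

section
/- The minimal KPP speed strictly exceeds the bistable wave speed: c_m > c_b, i.e. 2·√(f_m'(0)) > c_b. -/
open Real Filter Set

noncomputable section

/-- Hypotheses on a KPP nonlinearity `f_m`. -/
structure KPPHyp (fm : ℝ → ℝ) : Prop where
  smooth : ContDiff ℝ 1 fm
  zero : fm 0 = 0
  one : fm 1 = 0
  pos : ∀ s ∈ Set.Ioo (0:ℝ) 1, 0 < fm s
  le_lin : ∀ s ∈ Set.Ioo (0:ℝ) 1, fm s ≤ deriv fm 0 * s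
  deriv_one_neg : deriv fm 1 < 0
  neg : ∀ s : ℝ, 1 < s → fm s < 0

/-- The minimal KPP wave speed `c_m = 2√(f_m'(0))`. -/
def cm (fm : ℝ → ℝ) : ℝ := 2 * Real.sqrt (deriv fm 0)

/-- Hypotheses on a bistable nonlinearity `f_b` with interior zero `θ`. -/
structure BistableHyp (fb : ℝ → ℝ) (θ : ℝ) : Prop where
  smooth : ContDiff ℝ 1 fb
  theta_mem : θ ∈ Set.Ioo (0:ℝ) 1
  zero : fb 0 = 0
  at_theta : fb θ = 0
  one : fb 1 = 0
  d0 : deriv fb 0 < 0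
  dtheta : 0 < deriv fb θ
  d1 : deriv fb 1 < 0
  pos : ∀ s ∈ Set.Ioo θ 1, 0 < fb s
  neg_low : ∀ s ∈ Set.Ioo (0:ℝ) θ, fb s < 0
  neg_high : ∀ s : ℝ, 1 < s → fb s < 0

/-- The bistable traveling front `φ` with speed `c_b`, normalized by `φ(0) = θ`. -/
structure FrontHyp (fb : ℝ → ℝ) (θ cb : ℝ) (φ : ℝ → ℝ) : Prop where
  smooth : ContDiff ℝ 2 φ
  mem_Ioo : ∀ x, φ x ∈ Set.Ioo (0:ℝ) 1
  decreasing : ∀ x, deriv φ x < 0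
  ode : ∀ x, deriv (deriv φ) x + cb * deriv φ x + fb (φ x) = 0
  limBot : Filter.Tendsto φ Filter.atBot (nhds 1)
  limTop : Filter.Tendsto φ Filter.atTop (nhds 0)
  normalized : φ 0 = θ

/-- The heterogeneous KPP-transition-bistable reaction term `f(x,s)`. -/
structure HeterogHyp (fm fb : ℝ → ℝ) (L : ℝ) (f : ℝ → ℝ → ℝ) : Prop where
  Lpos : 0 < L
  smooth : ContDiff ℝ 2 (fun p : ℝ × ℝ => f p.1 p.2)
  lip : ∀ R : ℝ, 0 < R → ∃ K : ℝ, ∀ x : ℝ, ∀ s ∈ Set.Icc (-R) R, ∀ s' ∈ Set.Icc (-R) R,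
      |f x s - f x s'| ≤ K * |s - s'|
  zero : ∀ x, f x 0 = 0
  one : ∀ x, f x 1 = 0
  ds_one_neg : ∀ x, deriv (fun s => f x s) 1 < 0
  nonpos : ∀ x : ℝ, ∀ s : ℝ, 1 ≤ s → f x s ≤ 0
  eq_left : ∀ x : ℝ, x ≤ -L → ∀ s : ℝ, 0 ≤ s → f x s = fm s
  eq_right : ∀ x : ℝ, L ≤ x → ∀ s : ℝ, 0 ≤ s → f x s = fb s
  mono : ∀ s : ℝ, 0 ≤ s → AntitoneOn (fun x => f x s) (Set.Icc (-L) L)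

/-- A (bounded, nonnegative) solution of the Cauchy problem
`u_t = u_xx + c u_x + f(x,u)`, `u(0,·) = u₀`, with `u₀` continuous, nonnegative,
compactly supported and not identically zero. -/
structure CauchyHyp (f : ℝ → ℝ → ℝ) (c : ℝ) (u0 : ℝ → ℝ) (u : ℝ → ℝ → ℝ) : Prop where
  u0_cont : Continuous u0
  u0_nonneg : ∀ x, 0 ≤ u0 x
  u0_cpt : HasCompactSupport u0
  u0_ne : u0 ≠ 0
  nonneg : ∀ t : ℝ, 0 ≤ t → ∀ x, 0 ≤ u t x
  bdd : ∃ M : ℝ, ∀ t : ℝ, 0 ≤ t → ∀ x, u t x ≤ M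
  cont : ContinuousOn (fun p : ℝ × ℝ => u p.1 p.2) (Set.Ici 0 ×ˢ Set.univ)
  t_diff : ∀ t : ℝ, 0 < t → ∀ x : ℝ, DifferentiableAt ℝ (fun τ => u τ x) t
  x_smooth : ∀ t : ℝ, 0 < t → ContDiff ℝ 2 (fun y => u t y)
  pde : ∀ t : ℝ, 0 < t → ∀ x : ℝ,
      deriv (fun τ => u τ x) t =
        deriv (deriv (fun y => u t y)) x + c * deriv (fun y => u t y) x + f x (u t x)
  init : ∀ x, u 0 x = u0 x

/-- A positive bounded stationary solution connecting `1` at `-∞` to `0` at `+∞`. -/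
def IsFrontStat (f : ℝ → ℝ → ℝ) (c : ℝ) (U : ℝ → ℝ) : Prop :=
  ContDiff ℝ 2 U ∧ (∀ x, 0 < U x) ∧ (∃ M : ℝ, ∀ x, U x ≤ M) ∧
  (∀ x, deriv (deriv U) x + c * deriv U x + f x (U x) = 0) ∧
  Filter.Tendsto U Filter.atBot (nhds 1) ∧ Filter.Tendsto U Filter.atTop (nhds 0)

/-- the minimal KPP speed strictly exceeds the bistable wave speed. -/
theorem cm_gt_cb (fm fb : ℝ → ℝ) (θ cb : ℝ) (φ : ℝ → ℝ)
    (hfm : KPPHyp fm) (hfb : BistableHyp fb θ) (hφ : FrontHyp fb θ cb φ)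
    (horder : ∀ s : ℝ, 0 ≤ s → fb s ≤ fm s) :
    cb < 2 * Real.sqrt (deriv fm 0) := by
  by_contra hcon
  push_neg at hcon
  set K := deriv fm 0 with hKdef
  have hK : 0 < K := by
    have h1 := hfm.pos (1/2) (by norm_num)
    have h2 := hfm.le_lin (1/2) (by norm_num)
    nlinarith
  have hsK : 0 < Real.sqrt K := Real.sqrt_pos.mpr hK
  set l := cb / 2 with hl
  have hcb2 : cb = 2 * l := by rw [hl]; ring
  have hlge : Real.sqrt K ≤ l := by rw [hl]; linarith
  have hlpos : 0 < l := lt_of_lt_of_le hsK hlge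
  have hKl : K ≤ l ^ 2 := by nlinarith [Real.sq_sqrt hK.le, Real.sqrt_nonneg K]
  -- derivative infrastructure
  have hφdiff : Differentiable ℝ φ := hφ.smooth.differentiable (by norm_num)
  have hφ'diff : Differentiable ℝ (deriv φ) := by
    have h2 : ContDiff ℝ ((1:ℕ∞) + 1) φ := by exact_mod_cast hφ.smooth
    exact (contDiff_succ_iff_deriv.mp h2).2.2.differentiable (by simp)
  have hD : ∀ x, HasDerivAt φ (deriv φ x) x := fun x => (hφdiff x).hasDerivAt
  have hD' : ∀ x, HasDerivAt (deriv φ) (deriv (deriv φ) x) x := fun x => (hφ'diff x).hasDerivAt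
  have hODE : ∀ x, deriv (deriv φ) x = -(cb * deriv φ x) - fb (φ x) := by
    intro x; have := hφ.ode x; linarith
  have hφpos : ∀ x, 0 < φ x := fun x => (hφ.mem_Ioo x).1
  have hφlt1 : ∀ x, φ x < 1 := fun x => (hφ.mem_Ioo x).2
  have hφne : ∀ x, φ x ≠ 0 := fun x => (hφpos x).ne'
  have he : ∀ x, HasDerivAt (fun y => Real.exp (l * y)) (l * Real.exp (l * x)) x := by
    intro x
    have h0 : HasDerivAt (fun y => l * y) l x := by
      simpa using (hasDerivAt_id x).const_mul l
    convert h0.exp using 1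
    ring
  -- Step A: H x = φ'(x) + l φ(x) multiplied by exp(l x) has nonneg derivative
  set H : ℝ → ℝ := fun x => (deriv φ x + l * φ x) * Real.exp (l * x) with hHdef
  have hHd : ∀ x, HasDerivAt H ((l ^ 2 * φ x - fb (φ x)) * Real.exp (l * x)) x := by
    intro x
    have h1 : HasDerivAt (fun y => deriv φ y + l * φ y)
        (deriv (deriv φ) x + l * deriv φ x) x := (hD' x).add ((hD x).const_mul l)
    have h2 := h1.mul (he x)
    exact h2.congr_deriv (by rw [hODE x, hcb2]; ring)
  have hHder_nonneg : ∀ x, 0 ≤ l ^ 2 * φ x - fb (φ x) := by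
    intro x
    have hfm1 : fm (φ x) ≤ K * φ x := hfm.le_lin _ (hφ.mem_Ioo x)
    have hfb1 : fb (φ x) ≤ fm (φ x) := horder _ (hφpos x).le
    nlinarith [hφpos x]
  have hHmono : Monotone H := by
    apply monotone_of_deriv_nonneg (fun x => (hHd x).differentiableAt)
    intro x
    rw [(hHd x).deriv]
    exact mul_nonneg (hHder_nonneg x) (Real.exp_pos _).le
  have hhd : ∀ x, HasDerivAt (fun y => φ y * Real.exp (l * y)) (H x) x := by
    intro x
    have h2 := (hD x).mul (he x)
    exact h2.congr_deriv (by simp only [hHdef]; ring)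
  have hStepA : ∀ x, 0 ≤ deriv φ x + l * φ x := by
    by_contra hc
    push_neg at hc
    obtain ⟨x0, hx0⟩ := hc
    have hHx0 : H x0 < 0 := by
      have := Real.exp_pos (l * x0)
      simp only [hHdef]
      exact mul_neg_of_neg_of_pos hx0 this
    set A := -H x0 with hA
    have hApos : 0 < A := by simp only [hA]; linarith
    -- the function φ(x) e^{lx} - H(x0) x is antitone on Iic x0
    have hmono : AntitoneOn (fun x => φ x * Real.exp (l * x) - H x0 * x) (Set.Iic x0) := by
      apply antitoneOn_of_deriv_nonpos (convex_Iic x0)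
      · exact fun x _ => (((hhd x).sub ((hasDerivAt_id x).const_mul (H x0))).differentiableAt).continuousAt.continuousWithinAt
      · exact fun x _ => ((hhd x).sub ((hasDerivAt_id x).const_mul (H x0))).differentiableAt.differentiableWithinAt
      · intro x hx
        rw [interior_Iic] at hx
        have hd : HasDerivAt (fun x => φ x * Real.exp (l * x) - H x0 * x) (H x - H x0) x := by
          have := (hhd x).sub ((hasDerivAt_id x).const_mul (H x0))
          exact this.congr_deriv (by ring)
        rw [hd.deriv]
        have := hHmono hx.le
        linarith
    set y := x0 - Real.exp (l * x0) / A - 1 with hy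
    have hyle : y ≤ x0 := by
      have : 0 < Real.exp (l * x0) / A := div_pos (Real.exp_pos _) hApos
      rw [hy]; linarith
    have hkey := hmono (show y ∈ Set.Iic x0 from hyle) (show x0 ∈ Set.Iic x0 from le_refl x0) hyle
    -- hkey : φ x0 * exp(l x0) - H x0 * x0 ≤ φ y * exp(l y) - H x0 * y
    have hcancel : A * (Real.exp (l * x0) / A) = Real.exp (l * x0) :=
      mul_div_cancel₀ _ hApos.ne'
    have hbound1 : φ y * Real.exp (l * y) < Real.exp (l * y) := by
      have := Real.exp_pos (l * y)
      nlinarith [hφlt1 y]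
    have hbound2 : Real.exp (l * y) ≤ Real.exp (l * x0) :=
      Real.exp_le_exp.mpr (by nlinarith)
    have hφx0e : 0 < φ x0 * Real.exp (l * x0) :=
      mul_pos (hφpos x0) (Real.exp_pos _)
    have hHA : H x0 = -A := by rw [hA]; ring
    have hxy : x0 - y = Real.exp (l * x0) / A + 1 := by rw [hy]; ring
    have h5 : H x0 * x0 - H x0 * y = -(A * (x0 - y)) := by rw [hHA]; ring
    have h6 : A * (x0 - y) = Real.exp (l * x0) + A := by
      rw [hxy, mul_add, hcancel, mul_one]
    have hkey2 : φ x0 * Real.exp (l * x0) - H x0 * x0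
        ≤ φ y * Real.exp (l * y) - H x0 * y := hkey
    linarith
  -- Step B
  have hanti : StrictAnti φ := strictAnti_of_deriv_neg hφ.decreasing
  obtain ⟨x1, hx1⟩ : ∃ x1, φ x1 < θ :=
    (hφ.limTop.eventually_lt_const hfb.theta_mem.1).exists
  have hρd : ∀ x, HasDerivAt (fun y => deriv φ y / φ y)
      ((deriv (deriv φ) x * φ x - deriv φ x * deriv φ x) / (φ x) ^ 2) x :=
    fun x => (hD' x).div (hD x) (hφne x)
  have hGd : ∀ x, HasDerivAt (fun y => deriv φ y / φ y * Real.exp (l * y))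
      (((deriv (deriv φ) x * φ x - deriv φ x * deriv φ x) / (φ x) ^ 2
        + l * (deriv φ x / φ x)) * Real.exp (l * x)) x := by
    intro x
    have := (hρd x).mul (he x)
    exact this.congr_deriv (by ring)
  have hGderiv_nonneg : ∀ x, x1 < x →
      0 ≤ (deriv (deriv φ) x * φ x - deriv φ x * deriv φ x) / (φ x) ^ 2
        + l * (deriv φ x / φ x) := by
    intro x hx
    have hφθ : φ x < θ := lt_trans (hanti hx) hx1
    have hfbneg : fb (φ x) < 0 := hfb.neg_low _ ⟨hφpos x, hφθ⟩
    have hNum : 0 ≤ deriv (deriv φ) x * φ x - deriv φ x * deriv φ x + l * deriv φ x * φ x := by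
      rw [hODE x, hcb2]
      have h1 := hStepA x
      have h2 := hφ.decreasing x
      nlinarith [mul_nonneg (neg_nonneg.mpr h2.le) h1,
        mul_pos (neg_pos.mpr hfbneg) (hφpos x)]
    have heq : (deriv (deriv φ) x * φ x - deriv φ x * deriv φ x) / (φ x) ^ 2
        + l * (deriv φ x / φ x)
        = (deriv (deriv φ) x * φ x - deriv φ x * deriv φ x + l * deriv φ x * φ x) / (φ x) ^ 2 := by
      field_simp [hφne x]
    rw [heq]
    exact div_nonneg hNum (sq_nonneg _)
  have hGmono : MonotoneOn (fun y => deriv φ y / φ y * Real.exp (l * y)) (Set.Ici x1) := by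
    apply monotoneOn_of_deriv_nonneg (convex_Ici x1)
    · exact fun x _ => (hGd x).differentiableAt.continuousAt.continuousWithinAt
    · exact fun x _ => (hGd x).differentiableAt.differentiableWithinAt
    · intro x hx
      rw [interior_Ici] at hx
      rw [(hGd x).deriv]
      exact mul_nonneg (hGderiv_nonneg x hx) (Real.exp_pos _).le
  set C := deriv φ x1 / φ x1 * Real.exp (l * x1) with hC
  have hCneg : C < 0 := by
    have h1 := hφ.decreasing x1
    have h2 := hφpos x1
    have h3 := Real.exp_pos (l * x1)
    rw [hC]
    exact mul_neg_of_neg_of_pos (div_neg_of_neg_of_pos h1 h2) h3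
  -- F := log φ + (C/l) exp(-(l x))
  have hFd : ∀ x, HasDerivAt (fun y => Real.log (φ y) + C / l * Real.exp (-(l * y)))
      (deriv φ x / φ x - C * Real.exp (-(l * x))) x := by
    intro x
    have h1 : HasDerivAt (fun y => Real.log (φ y)) (deriv φ x / φ x) x :=
      (hD x).log (hφne x)
    have h2 : HasDerivAt (fun y => Real.exp (-(l * y))) (-l * Real.exp (-(l * x))) x := by
      have := (Real.hasDerivAt_exp (-(l * x))).comp x (((hasDerivAt_id x).const_mul l).neg)
      exact this.congr_deriv (by ring)
    have h3 := h1.add (h2.const_mul (C / l))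
    exact h3.congr_deriv (by field_simp; ring)
  have hFderiv_nonneg : ∀ x, x1 < x →
      0 ≤ deriv φ x / φ x - C * Real.exp (-(l * x)) := by
    intro x hx
    have hG := hGmono (show x1 ∈ Set.Ici x1 from le_refl x1)
      (show x ∈ Set.Ici x1 from hx.le) hx.le
    have hG' : C ≤ deriv φ x / φ x * Real.exp (l * x) := hG
    have hmul := mul_le_mul_of_nonneg_right hG' (Real.exp_pos (-(l * x))).le
    have h7 : deriv φ x / φ x * Real.exp (l * x) * Real.exp (-(l * x))
        = deriv φ x / φ x := by
      rw [mul_assoc, ← Real.exp_add]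
      simp
    rw [h7] at hmul
    linarith
  have hFmono : MonotoneOn (fun y => Real.log (φ y) + C / l * Real.exp (-(l * y)))
      (Set.Ici x1) := by
    apply monotoneOn_of_deriv_nonneg (convex_Ici x1)
    · exact fun x _ => (hFd x).differentiableAt.continuousAt.continuousWithinAt
    · exact fun x _ => (hFd x).differentiableAt.differentiableWithinAt
    · intro x hx
      rw [interior_Ici] at hx
      rw [(hFd x).deriv]
      exact hFderiv_nonneg x hx
  set B := Real.log (φ x1) + C / l * Real.exp (-(l * x1)) with hB
  have hlower : ∀ x, x1 ≤ x → Real.exp B ≤ φ x := by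
    intro x hx
    have hF := hFmono (show x1 ∈ Set.Ici x1 from le_refl x1)
      (show x ∈ Set.Ici x1 from hx) hx
    have hterm : C / l * Real.exp (-(l * x)) ≤ 0 := by
      have : C / l < 0 := div_neg_of_neg_of_pos hCneg hlpos
      exact (mul_nonpos_iff.mpr (Or.inr ⟨this.le, (Real.exp_pos _).le⟩))
    have hF' : Real.log (φ x1) + C / l * Real.exp (-(l * x1))
        ≤ Real.log (φ x) + C / l * Real.exp (-(l * x)) := hF
    have hlog : B ≤ Real.log (φ x) := by
      rw [hB]; linarith
    calc Real.exp B ≤ Real.exp (Real.log (φ x)) := Real.exp_le_exp.mpr hlog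
      _ = φ x := Real.exp_log (hφpos x)
  obtain ⟨x2, hx2, hx2'⟩ :=
    ((hφ.limTop.eventually_lt_const (Real.exp_pos B)).and (eventually_ge_atTop x1)).exists
  exact absurd (hlower x2 hx2') (not_le.mpr hx2)
end
end

section
/- For every t > 0 one has the Gaussian bounds u(t,x) ≤ M·e^{K t}·e^{-(x + c t + L₁)²/(4t)} for all x ≤ -c t - L₁, and u(t,x) ≤ M·e^{K t}·e^{-(x + c t - L₂)²/(4t)} for all x ≥ L₂ - c t, where M := max(1, sup_{x∈ℝ} u_0(x)). -/
open Real Filter Set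

noncomputable section

open Topology
lemma endpoint_deriv_nonneg {f : ℝ → ℝ} {t₀ : ℝ} (h0 : 0 < t₀)
    (hd : DifferentiableAt ℝ f t₀) (hmax : ∀ τ ∈ Set.Icc 0 t₀, f τ ≤ f t₀) :
    0 ≤ deriv f t₀ := by
  by_contra h
  push_neg at h
  have hs : Tendsto (slope f t₀) (𝓝[<] t₀) (𝓝 (deriv f t₀)) :=
    (hasDerivAt_iff_tendsto_slope.1 hd.hasDerivAt).mono_left
      (nhdsWithin_mono _ fun x hx => ne_of_lt hx)
  have hev : ∀ᶠ x in 𝓝[<] t₀, slope f t₀ x < 0 := hs.eventually_lt_const h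
  have hmem : Set.Ioo 0 t₀ ∈ 𝓝[<] t₀ := Ioo_mem_nhdsLT_of_mem ⟨h0, le_rfl⟩
  obtain ⟨x, hx1, hx2⟩ := (hev.and (eventually_of_mem hmem fun x hx => hx)).exists
  have hxt : x - t₀ < 0 := by linarith [hx2.2]
  have : f x - f t₀ > 0 := by
    have := hx1
    rw [slope_def_field] at this
    rw [div_neg_iff] at this
    rcases this with ⟨h1, h2⟩ | ⟨h1, h2⟩
    · linarith
    · linarith
  have := hmax x ⟨hx2.1.le, hx2.2.le⟩
  linarith

lemma second_deriv_nonpos_of_isLocalMax {f : ℝ → ℝ} {a : ℝ}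
    (hf : Differentiable ℝ f) (hf' : DifferentiableAt ℝ (deriv f) a)
    (hmax : IsLocalMax f a) : deriv (deriv f) a ≤ 0 := by
  by_contra h
  push_neg at h
  have h0 : deriv f a = 0 := hmax.deriv_eq_zero
  have hs : Tendsto (slope (deriv f) a) (𝓝[>] a) (𝓝 (deriv (deriv f) a)) :=
    (hasDerivAt_iff_tendsto_slope.1 hf'.hasDerivAt).mono_left
      (nhdsWithin_mono _ fun x hx => ne_of_gt hx)
  have hev : ∀ᶠ x in 𝓝[>] a, 0 < slope (deriv f) a x := hs.eventually_const_lt h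
  have hev2 : ∀ᶠ x in 𝓝[>] a, 0 < deriv f x := by
    filter_upwards [hev, self_mem_nhdsWithin] with x hx hx'
    rw [slope_def_field, h0, sub_zero] at hx
    have hxa : 0 < x - a := by simp only [Set.mem_Ioi] at hx'; linarith
    rcases div_pos_iff.1 hx with ⟨h1, _⟩ | ⟨_, h2⟩
    · exact h1
    · linarith
  obtain ⟨b, hb, hIoo⟩ := mem_nhdsGT_iff_exists_Ioo_subset.1 hev2
  have hba : a < b := hb
  have hmono : StrictMonoOn f (Set.Icc a b) := by
    apply strictMonoOn_of_deriv_pos (convex_Icc a b) (hf.continuous.continuousOn)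
    intro x hx
    rw [interior_Icc] at hx
    exact hIoo hx
  obtain ⟨ε, hε, hball⟩ := Metric.eventually_nhds_iff.1 hmax
  set x := a + min ε (b - a) / 2 with hxdef
  have hm : 0 < min ε (b - a) := lt_min hε (by linarith)
  have hax : a < x := by rw [hxdef]; linarith
  have hxb : x ≤ b := by
    have : min ε (b - a) ≤ b - a := min_le_right _ _
    rw [hxdef]; linarith
  have h1 : f a < f x := hmono ⟨le_rfl, hba.le⟩ ⟨hax.le, hxb⟩ hax
  have h2 : f x ≤ f a := by
    apply hball
    have hle : min ε (b - a) ≤ ε := min_le_left _ _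
    rw [Real.dist_eq, hxdef]
    have he : a + min ε (b - a) / 2 - a = min ε (b - a) / 2 := by ring
    rw [he, abs_of_pos (by linarith)]
    linarith
  linarith

lemma comparison_principle (c K T : ℝ) (hK : 0 < K) (hT : 0 < T) (z : ℝ → ℝ → ℝ) (M' : ℝ)
    (hzcont : ContinuousOn (fun p : ℝ × ℝ => z p.1 p.2) (Set.Icc 0 T ×ˢ Set.univ))
    (hzbdd : ∀ t ∈ Set.Icc (0:ℝ) T, ∀ x, z t x ≤ M')
    (hz0 : ∀ x, z 0 x ≤ 0)
    (hdt : ∀ t ∈ Set.Ioc (0:ℝ) T, ∀ x, DifferentiableAt ℝ (fun τ => z τ x) t)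
    (hdx : ∀ t ∈ Set.Ioc (0:ℝ) T, ContDiff ℝ 2 (fun y => z t y))
    (hineq : ∀ t ∈ Set.Ioc (0:ℝ) T, ∀ x, deriv (fun τ => z τ x) t ≤
        deriv (deriv (fun y => z t y)) x + c * deriv (fun y => z t y) x + K * z t x) :
    ∀ t ∈ Set.Icc (0:ℝ) T, ∀ x, z t x ≤ 0 := by
  have main : ∀ ε > 0, ∀ t ∈ Set.Icc (0:ℝ) T, ∀ x,
      Real.exp (-K * t) * z t x ≤ ε * Real.exp ((2 + |c|) * t) * Real.cosh x := by
    intro ε hε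
    by_contra hcon
    push_neg at hcon
    obtain ⟨t₁, ht₁, x₁, hx₁⟩ := hcon
    set ζ : ℝ × ℝ → ℝ := fun p =>
      Real.exp (-K * p.1) * z p.1 p.2 - ε * Real.exp ((2 + |c|) * p.1) * Real.cosh p.2 with hζdef
    have hζx₁ : 0 < ζ (t₁, x₁) := by
      show 0 < Real.exp (-K * t₁) * z t₁ x₁ - ε * Real.exp ((2 + |c|) * t₁) * Real.cosh x₁
      linarith
    set B : ℝ := max M' 0 with hBdef
    have hB0 : 0 ≤ B := le_max_right _ _
    have hBz : ∀ t ∈ Set.Icc (0:ℝ) T, ∀ x, Real.exp (-K * t) * z t x ≤ B := by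
      intro t htm x
      have he1 : Real.exp (-K * t) ≤ 1 := by
        rw [Real.exp_le_one_iff]
        nlinarith [htm.1]
      have he0 : 0 < Real.exp (-K * t) := Real.exp_pos _
      rcases le_or_gt (z t x) 0 with hzn | hzp
      · nlinarith
      · have := hzbdd t htm x
        nlinarith [le_max_left M' 0]
    set R : ℝ := |x₁| + |Real.log (2 * (B + 1) / ε)| + 1 with hRdef
    have hRx₁ : |x₁| < R := by
      rw [hRdef]; linarith [abs_nonneg (Real.log (2 * (B + 1) / ε))]
    have hR0 : 0 < R := lt_of_le_of_lt (abs_nonneg x₁) hRx₁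
    -- far field negativity
    have hfar : ∀ t ∈ Set.Icc (0:ℝ) T, ∀ x : ℝ, R ≤ |x| → ζ (t, x) < 0 := by
      intro t htm x hxR
      have hw : (0:ℝ) < 2 * (B + 1) / ε := by positivity
      have h1 : Real.log (2 * (B + 1) / ε) ≤ R := by
        rw [hRdef]
        calc Real.log (2 * (B + 1) / ε) ≤ |Real.log (2 * (B + 1) / ε)| := le_abs_self _
          _ ≤ |x₁| + |Real.log (2 * (B + 1) / ε)| + 1 := by
              linarith [abs_nonneg x₁]
      have h2 : 2 * (B + 1) / ε ≤ Real.exp |x| := by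
        rw [← Real.exp_log hw]
        exact Real.exp_le_exp.2 (le_trans h1 hxR)
      have h3 : Real.cosh x = (Real.exp |x| + Real.exp (-|x|)) / 2 := by
        rw [← Real.cosh_abs, Real.cosh_eq]
      have h4 : (B + 1) / ε ≤ Real.cosh x := by
        have := Real.exp_pos (-|x|)
        rw [h3]; rw [div_le_iff₀ hε] at *
        nlinarith
      have h5 : B + 1 ≤ ε * Real.cosh x := by
        have := (div_le_iff₀ hε).1 h4
        linarith
      have h6 : 1 ≤ Real.exp ((2 + |c|) * t) :=
        Real.one_le_exp (mul_nonneg (by positivity) htm.1)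
      have h7 : 0 < Real.cosh x := Real.cosh_pos x
      have h8 : ε * Real.cosh x ≤ ε * Real.exp ((2 + |c|) * t) * Real.cosh x := by
        nlinarith [mul_pos hε h7]
      have h9 := hBz t htm x
      show Real.exp (-K * t) * z t x - ε * Real.exp ((2 + |c|) * t) * Real.cosh x < 0
      linarith
    -- max over compact rectangle
    set S : Set (ℝ × ℝ) := Set.Icc (0:ℝ) T ×ˢ Set.Icc (-R) R with hSdef
    have hScomp : IsCompact S := isCompact_Icc.prod isCompact_Icc
    have hScont : ContinuousOn ζ S := by
      apply ContinuousOn.sub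
      · exact ((Real.continuous_exp.comp (continuous_const.mul continuous_fst)).continuousOn).mul
          (hzcont.mono (fun p hp => ⟨hp.1, trivial⟩))
      · exact ((continuous_const.mul
          (Real.continuous_exp.comp (continuous_const.mul continuous_fst))).mul
          (Real.continuous_cosh.comp continuous_snd)).continuousOn
    have hne : S.Nonempty :=
      ⟨(0, 0), Set.mem_prod.2 ⟨⟨le_rfl, hT.le⟩,
        Set.mem_Icc.2 ⟨show -R ≤ 0 by linarith, show (0:ℝ) ≤ R from hR0.le⟩⟩⟩
    obtain ⟨p₀, hp₀S, hp₀max⟩ := hScomp.exists_isMaxOn hne hScont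
    obtain ⟨t₀, x₀⟩ := p₀
    have hmax : ∀ q ∈ S, ζ q ≤ ζ (t₀, x₀) := fun q hq => hp₀max hq
    have ht₀ : t₀ ∈ Set.Icc (0:ℝ) T := hp₀S.1
    have hx₀ : x₀ ∈ Set.Icc (-R) R := hp₀S.2
    have h₁S : (t₁, x₁) ∈ S := Set.mem_prod.2 ⟨ht₁, abs_le.1 hRx₁.le⟩
    have hζ₀pos : 0 < ζ (t₀, x₀) := lt_of_lt_of_le hζx₁ (hmax _ h₁S)
    have ht₀pos : 0 < t₀ := by
      rcases eq_or_lt_of_le ht₀.1 with h | h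
      · exfalso
        have h1 := hz0 x₀
        have h2 := Real.one_le_cosh x₀
        have : ζ (t₀, x₀) = Real.exp (-K * t₀) * z t₀ x₀ -
            ε * Real.exp ((2 + |c|) * t₀) * Real.cosh x₀ := rfl
        rw [this, ← h] at hζ₀pos
        simp only [mul_zero, neg_zero, Real.exp_zero, one_mul, mul_one] at hζ₀pos
        nlinarith
      · exact h
    have hx₀lt : |x₀| < R := by
      rcases lt_or_ge |x₀| R with h | h
      · exact h
      · exact absurd (hfar t₀ ht₀ x₀ h) (not_lt.2 hζ₀pos.le)
    -- spatial derivative analysis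
    have ht₀Ioc : t₀ ∈ Set.Ioc (0:ℝ) T := ⟨ht₀pos, ht₀.2⟩
    have D := hdx t₀ ht₀Ioc
    have zdiff : Differentiable ℝ (fun y => z t₀ y) := D.differentiable (by norm_num)
    have D' : ContDiff ℝ 1 (deriv (fun y => z t₀ y)) := by
      have h2 : ContDiff ℝ ((1:ℕ) + 1) (fun y => z t₀ y) := by exact_mod_cast D
      exact (contDiff_succ_iff_deriv.mp h2).2.2
    have zxdiff : Differentiable ℝ (deriv (fun y => z t₀ y)) := D'.differentiable one_ne_zero
    set fx : ℝ → ℝ := fun y =>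
      Real.exp (-K * t₀) * z t₀ y - ε * Real.exp ((2 + |c|) * t₀) * Real.cosh y with hfxdef
    have hloc : IsLocalMax fx x₀ := by
      have hmem : Set.Ioo (-R) R ∈ 𝓝 x₀ :=
        Ioo_mem_nhds (abs_lt.1 hx₀lt).1 (abs_lt.1 hx₀lt).2
      filter_upwards [hmem] with y hy
      exact hmax (t₀, y) (Set.mem_prod.2 ⟨ht₀, ⟨hy.1.le, hy.2.le⟩⟩)
    have hfx' : ∀ y, HasDerivAt fx
        (Real.exp (-K * t₀) * deriv (fun y => z t₀ y) y -
          ε * Real.exp ((2 + |c|) * t₀) * Real.sinh y) y := fun y =>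
      (((zdiff y).hasDerivAt).const_mul _).sub ((Real.hasDerivAt_cosh y).const_mul _)
    have hfx_diff : Differentiable ℝ fx := fun y => (hfx' y).differentiableAt
    have hderiv_fx : deriv fx = fun y =>
        Real.exp (-K * t₀) * deriv (fun y => z t₀ y) y -
          ε * Real.exp ((2 + |c|) * t₀) * Real.sinh y := funext fun y => (hfx' y).deriv
    have h1 : Real.exp (-K * t₀) * deriv (fun y => z t₀ y) x₀ -
        ε * Real.exp ((2 + |c|) * t₀) * Real.sinh x₀ = 0 := by
      rw [← (hfx' x₀).deriv]
      exact hloc.deriv_eq_zero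
    have hdfx_diffAt : DifferentiableAt ℝ (deriv fx) x₀ := by
      rw [hderiv_fx]
      exact ((zxdiff x₀).const_mul _).sub ((Real.differentiable_sinh x₀).const_mul _)
    have hfx'' : HasDerivAt (deriv fx)
        (Real.exp (-K * t₀) * deriv (deriv (fun y => z t₀ y)) x₀ -
          ε * Real.exp ((2 + |c|) * t₀) * Real.cosh x₀) x₀ := by
      rw [hderiv_fx]
      exact (((zxdiff x₀).hasDerivAt).const_mul _).sub ((Real.hasDerivAt_sinh x₀).const_mul _)
    have h2 : Real.exp (-K * t₀) * deriv (deriv (fun y => z t₀ y)) x₀ -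
        ε * Real.exp ((2 + |c|) * t₀) * Real.cosh x₀ ≤ 0 := by
      rw [← hfx''.deriv]
      exact second_deriv_nonpos_of_isLocalMax hfx_diff hdfx_diffAt hloc
    -- time derivative analysis
    set ft : ℝ → ℝ := fun τ =>
      Real.exp (-K * τ) * z τ x₀ - ε * Real.exp ((2 + |c|) * τ) * Real.cosh x₀ with hftdef
    have hzt := (hdt t₀ ht₀Ioc x₀).hasDerivAt
    have hexpK : HasDerivAt (fun τ : ℝ => Real.exp (-K * τ))
        (Real.exp (-K * t₀) * (-K * 1)) t₀ := ((hasDerivAt_id t₀).const_mul (-K)).exp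
    have hexplam : HasDerivAt (fun τ : ℝ => Real.exp ((2 + |c|) * τ))
        (Real.exp ((2 + |c|) * t₀) * ((2 + |c|) * 1)) t₀ :=
      ((hasDerivAt_id t₀).const_mul (2 + |c|)).exp
    have hft' : HasDerivAt ft
        (Real.exp (-K * t₀) * (-K * 1) * z t₀ x₀ +
          Real.exp (-K * t₀) * deriv (fun τ => z τ x₀) t₀ -
          ε * (Real.exp ((2 + |c|) * t₀) * ((2 + |c|) * 1)) * Real.cosh x₀) t₀ :=
      (hexpK.mul hzt).sub ((hexplam.const_mul ε).mul_const _)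
    have h3 : 0 ≤ Real.exp (-K * t₀) * (-K * 1) * z t₀ x₀ +
        Real.exp (-K * t₀) * deriv (fun τ => z τ x₀) t₀ -
        ε * (Real.exp ((2 + |c|) * t₀) * ((2 + |c|) * 1)) * Real.cosh x₀ := by
      rw [← hft'.deriv]
      apply endpoint_deriv_nonneg ht₀pos hft'.differentiableAt
      intro τ hτ
      exact hmax (τ, x₀) (Set.mem_prod.2 ⟨⟨hτ.1, le_trans hτ.2 ht₀.2⟩, hx₀⟩)
    -- contradiction
    have hiq := hineq t₀ ht₀Ioc x₀
    have hepos : 0 < Real.exp (-K * t₀) := Real.exp_pos _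
    have hElpos : 0 < Real.exp ((2 + |c|) * t₀) := Real.exp_pos _
    have hcp : 0 < Real.cosh x₀ := Real.cosh_pos x₀
    have h5 : Real.exp (-K * t₀) * deriv (fun τ => z τ x₀) t₀ ≤
        Real.exp (-K * t₀) * (deriv (deriv (fun y => z t₀ y)) x₀ +
          c * deriv (fun y => z t₀ y) x₀ + K * z t₀ x₀) :=
      mul_le_mul_of_nonneg_left hiq hepos.le
    have hsinh_le : |Real.sinh x₀| ≤ Real.cosh x₀ := by
      rw [abs_le]
      constructor
      · have := Real.sinh_add_cosh x₀
        have := Real.exp_pos x₀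
        linarith
      · have := Real.cosh_sub_sinh x₀
        have := Real.exp_pos (-x₀)
        linarith
    have hsc : c * Real.sinh x₀ ≤ |c| * Real.cosh x₀ := by
      calc c * Real.sinh x₀ ≤ |c * Real.sinh x₀| := le_abs_self _
        _ = |c| * |Real.sinh x₀| := abs_mul _ _
        _ ≤ |c| * Real.cosh x₀ := mul_le_mul_of_nonneg_left hsinh_le (abs_nonneg c)
    have h7 : ε * Real.exp ((2 + |c|) * t₀) * (c * Real.sinh x₀) ≤
        ε * Real.exp ((2 + |c|) * t₀) * (|c| * Real.cosh x₀) :=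
      mul_le_mul_of_nonneg_left hsc (by positivity)
    have hpos : 0 < ε * Real.exp ((2 + |c|) * t₀) * Real.cosh x₀ := by positivity
    have h1c : c * (Real.exp (-K * t₀) * deriv (fun y => z t₀ y) x₀) =
        c * (ε * Real.exp ((2 + |c|) * t₀) * Real.sinh x₀) := by
      have h1' : Real.exp (-K * t₀) * deriv (fun y => z t₀ y) x₀ =
          ε * Real.exp ((2 + |c|) * t₀) * Real.sinh x₀ := by linarith
      rw [h1']
    linarith [h3, h5, h1c, h2, h7, hpos]
  -- conclude
  intro t htmem x
  have hzD : ∀ δ > (0:ℝ), z t x ≤ δ := by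
    intro δ hδ
    set D : ℝ := Real.exp (K * t) * Real.exp ((2 + |c|) * t) * Real.cosh x with hDdef
    have hD : 0 < D := by positivity
    have key := main (δ / D) (by positivity) t htmem x
    have h10 := mul_le_mul_of_nonneg_left key (Real.exp_pos (K * t)).le
    have hE2 : Real.exp (K * t) * (Real.exp (-K * t) * z t x) = z t x := by
      rw [← mul_assoc, ← Real.exp_add]
      have harg : K * t + -K * t = 0 := by ring
      rw [harg, Real.exp_zero, one_mul]
    have hE3 : Real.exp (K * t) * (δ / D * Real.exp ((2 + |c|) * t) * Real.cosh x) = δ := by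
      rw [hDdef]
      field_simp
    rw [hE2, hE3] at h10
    exact h10
  by_contra hzx
  push_neg at hzx
  linarith [hzD (z t x / 2) (by linarith)]

/-- Gaussian upper bounds for solutions of `u_t = u_xx + c u_x + g(u)`
with compactly supported initial data supported in `[-L₁, L₂]` and `g(s) ≤ K s` for `s ≥ 0`. -/
theorem gaussian_upper_bound (L₁ L₂ K c : ℝ) (g : ℝ → ℝ) (u0 : ℝ → ℝ) (u : ℝ → ℝ → ℝ)
    (hL₁ : 0 < L₁) (hL₂ : 0 < L₂) (hK : 0 < K)
    (hg : ContDiff ℝ 1 g) (hgK : ∀ s : ℝ, 0 ≤ s → g s ≤ K * s)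
    (hu0c : Continuous u0) (hu0n : ∀ x, 0 ≤ u0 x)
    (hsupp : Function.support u0 ⊆ Set.Icc (-L₁) L₂)
    (hnonneg : ∀ t : ℝ, 0 ≤ t → ∀ x, 0 ≤ u t x)
    (hbdd : ∃ M : ℝ, ∀ t : ℝ, 0 ≤ t → ∀ x, u t x ≤ M)
    (hcont : ContinuousOn (fun p : ℝ × ℝ => u p.1 p.2) (Set.Ici 0 ×ˢ Set.univ))
    (ht : ∀ t : ℝ, 0 < t → ∀ x : ℝ, DifferentiableAt ℝ (fun τ => u τ x) t)
    (hx : ∀ t : ℝ, 0 < t → ContDiff ℝ 2 (fun y => u t y))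
    (hpde : ∀ t : ℝ, 0 < t → ∀ x : ℝ,
      deriv (fun τ => u τ x) t =
        deriv (deriv (fun y => u t y)) x + c * deriv (fun y => u t y) x + g (u t x))
    (hinit : ∀ x, u 0 x = u0 x) :
    ∀ t : ℝ, 0 < t →
      (∀ x : ℝ, x ≤ -c * t - L₁ →
        u t x ≤ max 1 (⨆ x, u0 x) * Real.exp (K * t) *
          Real.exp (-(x + c * t + L₁) ^ 2 / (4 * t))) ∧
      (∀ x : ℝ, L₂ - c * t ≤ x →
        u t x ≤ max 1 (⨆ x, u0 x) * Real.exp (K * t) *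
          Real.exp (-(x + c * t - L₂) ^ 2 / (4 * t))) := by
  obtain ⟨Mb, hMb⟩ := hbdd
  set M : ℝ := max 1 (⨆ x, u0 x) with hMdef
  have hM1 : (1:ℝ) ≤ M := le_max_left _ _
  have hM0 : (0:ℝ) < M := lt_of_lt_of_le one_pos hM1
  have hbdd0 : BddAbove (Set.range u0) := by
    have hcomp : IsCompact (u0 '' Set.Icc (-L₁) L₂) := isCompact_Icc.image hu0c
    have hsub : Set.range u0 ⊆ insert 0 (u0 '' Set.Icc (-L₁) L₂) := by
      rintro _ ⟨y, rfl⟩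
      by_cases h : u0 y = 0
      · rw [h]; exact Set.mem_insert _ _
      · exact Set.mem_insert_of_mem _ ⟨y, hsupp h, rfl⟩
    exact BddAbove.mono hsub (hcomp.bddAbove.insert 0)
  have hu0M : ∀ y, u0 y ≤ M := fun y => le_trans (le_ciSup hbdd0 y) (le_max_right _ _)
  intro t htpos
  have htne : t ≠ 0 := ne_of_gt htpos
  -- Key claim: comparison with exponential supersolutions
  have claim : ∀ μ a : ℝ, (∀ y, u0 y ≤ M * Real.exp (μ * (y + a))) →
      ∀ x, u t x ≤ M * Real.exp (K * t + μ * (x + c * t + a) + μ ^ 2 * t) := by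
    intro μ a h0 x
    set E : ℝ → ℝ → ℝ := fun s y => M * Real.exp (K * s + μ * (y + c * s + a) + μ ^ 2 * s)
      with hEdef
    have hEpos : ∀ s y, 0 < E s y := fun s y => mul_pos hM0 (Real.exp_pos _)
    have hEt : ∀ s y, HasDerivAt (fun τ => E τ y) ((K + μ * c + μ ^ 2) * E s y) s := by
      intro s y
      have h1 : HasDerivAt (fun τ : ℝ => K * τ) (K * 1) s := (hasDerivAt_id s).const_mul K
      have h2 : HasDerivAt (fun τ : ℝ => y + c * τ + a) (c * 1) s :=
        (((hasDerivAt_id s).const_mul c).const_add y).add_const a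
      have h3 : HasDerivAt (fun τ : ℝ => μ * (y + c * τ + a)) (μ * (c * 1)) s := h2.const_mul μ
      have h4 : HasDerivAt (fun τ : ℝ => μ ^ 2 * τ) (μ ^ 2 * 1) s :=
        (hasDerivAt_id s).const_mul (μ ^ 2)
      have hbase : HasDerivAt (fun τ : ℝ => K * τ + μ * (y + c * τ + a) + μ ^ 2 * τ)
          (K * 1 + μ * (c * 1) + μ ^ 2 * 1) s := (h1.add h3).add h4
      have hfull := hbase.exp.const_mul M
      convert hfull using 1
      · rfl
      · rfl
      rw [hEdef]
      ring
    have hEx : ∀ s y, HasDerivAt (fun y' => E s y') (μ * E s y) y := by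
      intro s y
      have h2 : HasDerivAt (fun y' : ℝ => y' + c * s + a) 1 y :=
        ((hasDerivAt_id y).add_const (c * s)).add_const a
      have hbase : HasDerivAt (fun y' : ℝ => K * s + μ * (y' + c * s + a) + μ ^ 2 * s)
          (μ * 1) y := ((h2.const_mul μ).const_add (K * s)).add_const (μ ^ 2 * s)
      have hfull := hbase.exp.const_mul M
      convert hfull using 1
      · rfl
      · rfl
      rw [hEdef]
      ring
    have hEc : Continuous (fun p : ℝ × ℝ => E p.1 p.2) := by
      rw [hEdef]
      fun_prop
    have hEcd2 : ∀ s, ContDiff ℝ 2 (fun y => E s y) := by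
      intro s
      rw [hEdef]
      fun_prop
    have hcomp := comparison_principle c K t hK htpos (fun s y => u s y - E s y) Mb
      (by
        apply ContinuousOn.sub
        · exact hcont.mono (fun p hp => ⟨hp.1.1, trivial⟩)
        · exact hEc.continuousOn)
      (fun s hs y => by
        have h := hMb s hs.1 y
        have := hEpos s y
        show u s y - E s y ≤ Mb
        linarith)
      (fun y => by
        show u 0 y - E 0 y ≤ 0
        have h := h0 y
        have hE0 : E 0 y = M * Real.exp (μ * (y + a)) := by
          rw [hEdef]
          norm_num
        rw [hinit y, hE0]
        linarith)
      (fun s hs y => (ht s hs.1 y).sub (hEt s y).differentiableAt)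
      (fun s hs => (hx s hs.1).sub (hEcd2 s))
      (by
        intro s hs y
        show deriv (fun τ => u τ y - E τ y) s ≤
          deriv (deriv (fun y'' => u s y'' - E s y'')) y +
            c * deriv (fun y'' => u s y'' - E s y'') y + K * (u s y - E s y)
        have hud2 : ContDiff ℝ ((1:ℕ) + 1) (fun y' => u s y') := by exact_mod_cast hx s hs.1
        have hudiff : Differentiable ℝ (fun y' => u s y') :=
          (hx s hs.1).differentiable (by norm_num)
        have hDu : ContDiff ℝ 1 (deriv (fun y' => u s y')) :=
          (contDiff_succ_iff_deriv.mp hud2).2.2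
        have hzt : deriv (fun τ => u τ y - E τ y) s =
            deriv (fun τ => u τ y) s - (K + μ * c + μ ^ 2) * E s y :=
          (((ht s hs.1 y).hasDerivAt).sub (hEt s y)).deriv
        have hzx : ∀ y' : ℝ, deriv (fun y'' => u s y'' - E s y'') y' =
            deriv (fun y'' => u s y'') y' - μ * E s y' := fun y' =>
          (((hudiff y').hasDerivAt).sub (hEx s y')).deriv
        have hdzx : deriv (fun y'' => u s y'' - E s y'') =
            fun y' => deriv (fun y'' => u s y'') y' - μ * E s y' := funext hzx
        have hzxx : deriv (deriv (fun y'' => u s y'' - E s y'')) y =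
            deriv (deriv (fun y'' => u s y'')) y - μ * (μ * E s y) := by
          rw [hdzx]
          exact (((hDu.differentiable one_ne_zero y).hasDerivAt).sub
            ((hEx s y).const_mul μ)).deriv
        rw [hzt, hzx y, hzxx, hpde s hs.1 y]
        have hgu := hgK (u s y) (hnonneg s hs.1.le y)
        nlinarith [hEpos s y]
      )
    have h9 : u t x - E t x ≤ 0 := hcomp t ⟨htpos.le, le_rfl⟩ x
    have hEt' : E t x = M * Real.exp (K * t + μ * (x + c * t + a) + μ ^ 2 * t) := rfl
    linarith [h9, hEt'.le, hEt'.ge]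
  constructor
  · -- left Gaussian bound
    intro x hxle
    have hξ : x + c * t + L₁ ≤ 0 := by linarith
    have hμ0 : 0 ≤ -(x + c * t + L₁) / (2 * t) := by
      apply div_nonneg (by linarith) (by linarith)
    have h0 : ∀ y, u0 y ≤ M * Real.exp (-(x + c * t + L₁) / (2 * t) * (y + L₁)) := by
      intro y
      by_cases h : u0 y = 0
      · rw [h]; positivity
      · have hy := hsupp h
        have h1 : 0 ≤ -(x + c * t + L₁) / (2 * t) * (y + L₁) :=
          mul_nonneg hμ0 (by linarith [hy.1])
        calc u0 y ≤ M := hu0M y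
          _ = M * 1 := (mul_one M).symm
          _ ≤ M * Real.exp (-(x + c * t + L₁) / (2 * t) * (y + L₁)) :=
            mul_le_mul_of_nonneg_left (Real.one_le_exp h1) hM0.le
    have hb := claim (-(x + c * t + L₁) / (2 * t)) L₁ h0 x
    have harg : M * Real.exp (K * t + -(x + c * t + L₁) / (2 * t) * (x + c * t + L₁) +
        (-(x + c * t + L₁) / (2 * t)) ^ 2 * t) =
        M * Real.exp (K * t) * Real.exp (-(x + c * t + L₁) ^ 2 / (4 * t)) := by
      rw [mul_assoc, ← Real.exp_add]
      congr 2
      field_simp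
      ring
    rw [harg] at hb
    exact hb
  · -- right Gaussian bound
    intro x hxge
    have hξ : 0 ≤ x + c * t - L₂ := by linarith
    have hμ0 : -(x + c * t - L₂) / (2 * t) ≤ 0 := by
      apply div_nonpos_of_nonpos_of_nonneg (by linarith) (by linarith)
    have h0 : ∀ y, u0 y ≤ M * Real.exp (-(x + c * t - L₂) / (2 * t) * (y + -L₂)) := by
      intro y
      by_cases h : u0 y = 0
      · rw [h]; positivity
      · have hy := hsupp h
        have h1 : 0 ≤ -(x + c * t - L₂) / (2 * t) * (y + -L₂) := by
          nlinarith [hy.2]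
        calc u0 y ≤ M := hu0M y
          _ = M * 1 := (mul_one M).symm
          _ ≤ M * Real.exp (-(x + c * t - L₂) / (2 * t) * (y + -L₂)) :=
            mul_le_mul_of_nonneg_left (Real.one_le_exp h1) hM0.le
    have hb := claim (-(x + c * t - L₂) / (2 * t)) (-L₂) h0 x
    have harg : M * Real.exp (K * t + -(x + c * t - L₂) / (2 * t) * (x + c * t + -L₂) +
        (-(x + c * t - L₂) / (2 * t)) ^ 2 * t) =
        M * Real.exp (K * t) * Real.exp (-(x + c * t - L₂) ^ 2 / (4 * t)) := by
      rw [mul_assoc, ← Real.exp_add]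
      congr 2
      field_simp
      ring
    rw [harg] at hb
    exact hb
end
end

section
/- Assume c ≤ -c_m. Then for every x₀ ∈ ℝ, sup over x ≤ -(c_m + c)·t + x₀ of u(t,x) tends to 0 as t → ∞; in particular, for every x₀ ∈ ℝ, sup over x ≤ x₀ of u(t,x) tends to 0 as t → ∞. -/
open Real Filter Set

noncomputable section

open Topology

def Wfun (A a c : ℝ) (t x : ℝ) : ℝ :=
  A * Real.exp (a * t - (x + c * t) ^ 2 / (4 * (t + 1)) - Real.log (t + 1) / 2)

lemma Wfun_pos {A : ℝ} (a c t x : ℝ) (hA : 0 < A) : 0 < Wfun A a c t x :=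
  mul_pos hA (Real.exp_pos _)

lemma Wfun_hasDerivAt_x (A a c : ℝ) {t : ℝ} (ht : 0 < t + 1) (x : ℝ) :
    HasDerivAt (fun y => Wfun A a c t y)
      (-(x + c * t) / (2 * (t + 1)) * Wfun A a c t x) x := by
  have h1 : HasDerivAt (fun y : ℝ => y + c * t) 1 x := (hasDerivAt_id x).add_const _
  have h2 : HasDerivAt (fun y : ℝ => (y + c * t) ^ 2) (2 * (x + c * t)) x := by
    simpa using h1.fun_pow 2
  have h3 := h2.div_const (4 * (t + 1))
  have h4 : HasDerivAt (fun y : ℝ => a * t - (y + c * t) ^ 2 / (4 * (t + 1)) - Real.log (t + 1) / 2)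
      (-(2 * (x + c * t) / (4 * (t + 1)))) x := by
    simpa using (((hasDerivAt_const x (a * t)).sub h3).sub_const (Real.log (t + 1) / 2))
  have h5 := h4.exp.const_mul A
  refine h5.congr_deriv ?_
  unfold Wfun
  have hne : (t + 1) ≠ 0 := ne_of_gt ht
  field_simp
  ring

lemma Wfun_hasDerivAt_xx (A a c : ℝ) {t : ℝ} (ht : 0 < t + 1) (x : ℝ) :
    HasDerivAt (fun y => -(y + c * t) / (2 * (t + 1)) * Wfun A a c t y)
      (((x + c * t) ^ 2 / (4 * (t + 1) ^ 2) - 1 / (2 * (t + 1))) * Wfun A a c t x) x := by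
  have h1 : HasDerivAt (fun y : ℝ => -(y + c * t) / (2 * (t + 1))) (-1 / (2 * (t + 1))) x := by
    have h0 : HasDerivAt (fun y : ℝ => -(y + c * t)) (-1) x := ((hasDerivAt_id x).add_const _).neg
    simpa using h0.div_const (2 * (t + 1))
  have := h1.mul (Wfun_hasDerivAt_x A a c ht x)
  refine this.congr_deriv ?_
  have hne : (t + 1) ≠ 0 := ne_of_gt ht
  field_simp
  ring

lemma Wfun_deriv2 (A a c : ℝ) {t : ℝ} (ht : 0 < t + 1) (x : ℝ) :
    deriv (deriv (fun y => Wfun A a c t y)) x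
      = ((x + c * t) ^ 2 / (4 * (t + 1) ^ 2) - 1 / (2 * (t + 1))) * Wfun A a c t x := by
  have hfun : deriv (fun y => Wfun A a c t y)
      = fun y => -(y + c * t) / (2 * (t + 1)) * Wfun A a c t y :=
    funext fun y => (Wfun_hasDerivAt_x A a c ht y).deriv
  rw [hfun]
  exact (Wfun_hasDerivAt_xx A a c ht x).deriv

lemma Wfun_hasDerivAt_t (A a c : ℝ) {t : ℝ} (ht : 0 < t + 1) (x : ℝ) :
    HasDerivAt (fun τ => Wfun A a c τ x)
      ((a - c * (x + c * t) / (2 * (t + 1)) + (x + c * t) ^ 2 / (4 * (t + 1) ^ 2)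
        - 1 / (2 * (t + 1))) * Wfun A a c t x) t := by
  have hne : (4 * (t + 1)) ≠ 0 := by positivity
  have h1 : HasDerivAt (fun τ : ℝ => x + c * τ) c t := by
    simpa using ((hasDerivAt_id t).const_mul c).const_add x
  have h2 : HasDerivAt (fun τ : ℝ => (x + c * τ) ^ 2) (2 * (x + c * t) * c) t := by
    simpa using h1.fun_pow 2
  have h3 : HasDerivAt (fun τ : ℝ => 4 * (τ + 1)) 4 t := by
    simpa using ((hasDerivAt_id t).add_const (1:ℝ)).const_mul 4
  have h4 := h2.fun_div h3 hne
  have h5 : HasDerivAt (fun τ : ℝ => Real.log (τ + 1)) (1 / (t + 1)) t := by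
    have := ((hasDerivAt_id t).add_const (1:ℝ)).log (ne_of_gt ht)
    simpa using this
  have h6 : HasDerivAt (fun τ : ℝ => a * τ) a t := by
    simpa using (hasDerivAt_id t).const_mul a
  have h7 := ((h6.fun_sub h4).fun_sub (h5.div_const 2)).exp.const_mul A
  refine h7.congr_deriv ?_
  unfold Wfun
  have hne2 : (t + 1) ≠ 0 := ne_of_gt ht
  field_simp
  ring

lemma deriv_nonneg_of_left_max {g : ℝ → ℝ} {m t0 : ℝ} (hd : HasDerivAt g m t0) (h0 : 0 < t0)
    (hle : ∀ t, 0 ≤ t → t < t0 → g t ≤ g t0) : 0 ≤ m := by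
  have hsub : Ioo 0 t0 \ {t0} = Ioo 0 t0 := by
    apply diff_singleton_eq_self
    simp
  have hne : (𝓝[Ioo 0 t0] t0).NeBot := by
    rw [← mem_closure_iff_nhdsWithin_neBot, closure_Ioo (show (0:ℝ) ≠ t0 from ne_of_lt h0)]
    exact ⟨le_of_lt h0, le_refl t0⟩
  have htd : Tendsto (slope g t0) (𝓝[Ioo 0 t0] t0) (𝓝 m) := by
    have h := (hd.hasDerivWithinAt (s := Ioo 0 t0))
    rw [hasDerivWithinAt_iff_tendsto_slope, hsub] at h
    exact h
  refine ge_of_tendsto htd ?_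
  filter_upwards [self_mem_nhdsWithin] with t ht
  have h1 : g t ≤ g t0 := hle t (le_of_lt ht.1) ht.2
  rw [slope_def_field]
  exact div_nonneg_of_nonpos (by linarith) (by linarith [ht.2])

lemma contDiff_two_deriv_diff {g : ℝ → ℝ} (hg : ContDiff ℝ 2 g) :
    Differentiable ℝ (deriv g) := by
  have h2 : ContDiff ℝ (1 + 1) g := by
    exact_mod_cast hg
  exact ((contDiff_succ_iff_deriv.mp h2).2.2).differentiable one_ne_zero

lemma deriv2_nonpos_of_max {g : ℝ → ℝ} {x0 : ℝ} (hg : ContDiff ℝ 2 g)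
    (hmax : ∀ y, g y ≤ g x0) : deriv (deriv g) x0 ≤ 0 := by
  by_contra hpos
  push_neg at hpos
  have hdg : Differentiable ℝ (deriv g) := contDiff_two_deriv_diff hg
  have h0 : deriv g x0 = 0 :=
    IsLocalMax.deriv_eq_zero (Filter.Eventually.of_forall hmax)
  have hD : HasDerivAt (deriv g) (deriv (deriv g) x0) x0 := (hdg x0).hasDerivAt
  have hslope : Tendsto (slope (deriv g) x0) (𝓝[>] x0) (𝓝 (deriv (deriv g) x0)) := by
    have h := hasDerivAt_iff_tendsto_slope.mp hD
    refine h.mono_left (nhdsWithin_mono _ ?_)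
    intro y hy
    simp only [mem_compl_iff, mem_singleton_iff]
    exact ne_of_gt hy
  have hev : ∀ᶠ y in 𝓝[>] x0, 0 < slope (deriv g) x0 y :=
    hslope.eventually (eventually_gt_nhds hpos)
  obtain ⟨u, hu, hsub⟩ := mem_nhdsGT_iff_exists_Ioo_subset.mp hev
  have hx0u : x0 < u := hu
  have hx0u' : x0 < (x0 + u) / 2 := by linarith
  have hu'u : (x0 + u) / 2 < u := by linarith
  have hmono : StrictMonoOn g (Icc x0 ((x0 + u) / 2)) := by
    apply strictMonoOn_of_deriv_pos (convex_Icc _ _) (hg.continuous.continuousOn)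
    intro y hy
    rw [interior_Icc] at hy
    have h1 : 0 < slope (deriv g) x0 y := hsub ⟨hy.1, lt_trans hy.2 hu'u⟩
    rw [slope_def_field, h0, sub_zero] at h1
    rcases div_pos_iff.mp h1 with ⟨hnum, _⟩ | ⟨_, hden⟩
    · exact hnum
    · linarith [sub_pos.2 hy.1]
  have hlt : g x0 < g ((x0 + u) / 2) :=
    hmono ⟨le_refl _, le_of_lt hx0u'⟩ ⟨le_of_lt hx0u', le_refl _⟩ hx0u'
  exact absurd (hmax ((x0 + u) / 2)) (not_le.2 hlt)

lemma abs_le_two_mul_cosh (x : ℝ) : |x| ≤ 2 * Real.cosh x := by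
  have h1 := Real.add_one_le_exp x
  have h2 := Real.add_one_le_exp (-x)
  have h3 := Real.cosh_eq x
  rcases abs_cases x with ⟨h, _⟩ | ⟨h, _⟩ <;> rw [h] <;> nlinarith [Real.exp_pos x, Real.exp_pos (-x)]

lemma mul_sinh_le (c x : ℝ) : c * Real.sinh x ≤ |c| * Real.cosh x := by
  have h1 : Real.sinh x < Real.cosh x := Real.sinh_lt_cosh x
  have h2 : -Real.cosh x < Real.sinh x := by
    have := Real.sinh_lt_cosh (-x)
    rw [Real.sinh_neg, Real.cosh_neg] at this
    linarith
  have h3 : c ≤ |c| := le_abs_self c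
  have h4 : -c ≤ |c| := neg_le_abs c
  nlinarith

lemma comparison
    (f : ℝ → ℝ → ℝ) (c a A M T K : ℝ) (u : ℝ → ℝ → ℝ)
    (ha : 0 ≤ a) (hA : 0 < A) (hM : 0 ≤ M)
    (hcont : ContinuousOn (fun p : ℝ × ℝ => u p.1 p.2) (Set.Ici 0 ×ˢ Set.univ))
    (ht_diff : ∀ t : ℝ, 0 < t → ∀ x : ℝ, DifferentiableAt ℝ (fun τ => u τ x) t)
    (hx_smooth : ∀ t : ℝ, 0 < t → ContDiff ℝ 2 (fun y => u t y))
    (hpde : ∀ t : ℝ, 0 < t → ∀ x : ℝ, deriv (fun τ => u τ x) t =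
        deriv (deriv (fun y => u t y)) x + c * deriv (fun y => u t y) x + f x (u t x))
    (hnonneg : ∀ t, 0 ≤ t → ∀ x, 0 ≤ u t x)
    (hbdd : ∀ t, 0 ≤ t → ∀ x, u t x ≤ M)
    (hlin : ∀ x s, 0 ≤ s → f x s ≤ a * s)
    (hK : ∀ x : ℝ, ∀ s ∈ Set.Icc (-(M + A * Real.exp (a * T) + 1)) (M + A * Real.exp (a * T) + 1),
        ∀ s' ∈ Set.Icc (-(M + A * Real.exp (a * T) + 1)) (M + A * Real.exp (a * T) + 1),
        |f x s - f x s'| ≤ K * |s - s'|)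
    (hinit : ∀ x, u 0 x ≤ Wfun A a c 0 x) :
    ∀ t, 0 ≤ t → t ≤ T → ∀ x, u t x ≤ Wfun A a c t x := by
  set β : ℝ := |K| + |c| + 2 with hβ
  have hβpos : 0 < β := by positivity
  suffices Hδ : ∀ δ : ℝ, 0 < δ → ∀ t, 0 ≤ t → t ≤ T → ∀ x,
      u t x - Wfun A a c t x - δ * Real.exp (β * t) * Real.cosh x < 0 by
    intro t ht htT x
    by_contra hlt
    push_neg at hlt
    have hE : 0 < Real.exp (β * t) * Real.cosh x :=
      mul_pos (Real.exp_pos _) (lt_of_lt_of_le one_pos (Real.one_le_cosh x))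
    have hdpos : 0 < u t x - Wfun A a c t x := sub_pos.2 hlt
    have h1 := Hδ ((u t x - Wfun A a c t x) / (2 * (Real.exp (β * t) * Real.cosh x)))
      (by positivity) t ht htT x
    have h2 : (u t x - Wfun A a c t x) / (2 * (Real.exp (β * t) * Real.cosh x))
        * Real.exp (β * t) * Real.cosh x = (u t x - Wfun A a c t x) / 2 := by
      field_simp
    rw [h2] at h1
    linarith
  intro δ hδ
  by_contra hcon
  push_neg at hcon
  obtain ⟨t1, ht1, ht1T, x1, hge⟩ := hcon
  set g : ℝ × ℝ → ℝ := fun p =>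
    u p.1 p.2 - Wfun A a c p.1 p.2 - δ * Real.exp (β * p.1) * Real.cosh p.2 with hgdef
  set D : Set (ℝ × ℝ) := Set.Icc 0 T ×ˢ (Set.univ : Set ℝ) with hDdef
  -- continuity of g on D
  have hWcont : ContinuousOn (fun p : ℝ × ℝ => Wfun A a c p.1 p.2) D := by
    apply continuousOn_const.mul
    apply Real.continuous_exp.comp_continuousOn
    apply ContinuousOn.sub
    apply ContinuousOn.sub
    · exact (continuous_const.mul continuous_fst).continuousOn
    · apply ContinuousOn.div
      · exact ((continuous_snd.add (continuous_const.mul continuous_fst)).pow 2).continuousOn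
      · exact (continuous_const.mul (continuous_fst.add continuous_const)).continuousOn
      · intro p hp
        have h0 : (0:ℝ) ≤ p.1 := hp.1.1
        have : (0:ℝ) < 4 * (p.1 + 1) := by linarith
        exact ne_of_gt this
    · apply ContinuousOn.div_const
      apply ContinuousOn.log
      · exact (continuous_fst.add continuous_const).continuousOn
      · intro p hp
        have h0 : (0:ℝ) ≤ p.1 := hp.1.1
        have : (0:ℝ) < p.1 + 1 := by linarith
        exact ne_of_gt this
  have hbarcont : Continuous (fun p : ℝ × ℝ => δ * Real.exp (β * p.1) * Real.cosh p.2) :=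
    ((continuous_const.mul (Real.continuous_exp.comp (continuous_const.mul continuous_fst)))).mul
      (Real.continuous_cosh.comp continuous_snd)
  have hgcont : ContinuousOn g D := by
    refine ((hcont.mono ?_).sub hWcont).sub hbarcont.continuousOn
    exact Set.prod_mono Set.Icc_subset_Ici_self (le_refl _)
  -- the set S
  set S : Set (ℝ × ℝ) := D ∩ g ⁻¹' (Set.Ici 0) with hSdef
  have hSsub : S ⊆ Set.Icc 0 T ×ˢ Set.Icc (-(2 * M / δ + 1)) (2 * M / δ + 1) := by
    rintro ⟨t, x⟩ ⟨hD1, hg1⟩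
    have ht : (0:ℝ) ≤ t := hD1.1.1
    have hgx : (0:ℝ) ≤ g (t, x) := hg1
    have hW : 0 < Wfun A a c t x := Wfun_pos a c t x hA
    have hu : u t x ≤ M := hbdd t ht x
    have hexp1 : (1:ℝ) ≤ Real.exp (β * t) := Real.one_le_exp (by positivity)
    have hch : 0 < Real.cosh x := lt_of_lt_of_le one_pos (Real.one_le_cosh x)
    have hcosh : δ * Real.cosh x ≤ M := by
      have : δ * Real.exp (β * t) * Real.cosh x ≤ M := by
        simp only [hgdef] at hgx
        nlinarith
      nlinarith
    have habs : |x| ≤ 2 * M / δ + 1 := by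
      have h2 := abs_le_two_mul_cosh x
      rw [div_add' _ _ _ (ne_of_gt hδ), le_div_iff₀ hδ]
      nlinarith
    exact ⟨hD1.1, abs_le.mp habs⟩
  have hScl : IsClosed S :=
    hgcont.preimage_isClosed_of_isClosed (IsClosed.prod isClosed_Icc isClosed_univ) isClosed_Ici
  have hScp : IsCompact S :=
    (IsCompact.prod isCompact_Icc isCompact_Icc).of_isClosed_subset hScl hSsub
  have hSne : S.Nonempty := by
    refine ⟨(t1, x1), ⟨⟨⟨ht1, ht1T⟩, trivial⟩, ?_⟩⟩
    simp only [Set.mem_preimage, Set.mem_Ici, hgdef]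
    linarith
  obtain ⟨⟨t0, x0⟩, hpS, hpmin⟩ := hScp.exists_isMinOn hSne continuous_fst.continuousOn
  have hpmin' : ∀ q ∈ S, t0 ≤ q.1 := fun q hq => hpmin hq
  have ht0 : 0 ≤ t0 := hpS.1.1.1
  have ht0T : t0 ≤ T := hpS.1.1.2
  have hg0 : 0 ≤ g (t0, x0) := hpS.2
  have ht1p' : ∀ t : ℝ, 0 ≤ t → (0:ℝ) < t + 1 := fun t ht => by linarith
  -- t0 > 0
  have ht0pos : 0 < t0 := by
    rcases eq_or_lt_of_le ht0 with h | h
    · exfalso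
      have h1 := hinit x0
      have h2 := Real.one_le_cosh x0
      simp only [hgdef] at hg0
      rw [← h, mul_zero, Real.exp_zero] at hg0
      nlinarith
    · exact h
  have ht1p : (0:ℝ) < t0 + 1 := by linarith
  -- the slice t = t0 is nonpositive
  have hslice : ∀ y, g (t0, y) ≤ 0 := by
    intro y
    by_contra hy
    push_neg at hy
    have hmem : (t0, y) ∈ D := ⟨⟨ht0, ht0T⟩, trivial⟩
    have h1 : ContinuousWithinAt g D (t0, y) := hgcont _ hmem
    have h2 : Continuous (fun t : ℝ => ((t, y) : ℝ × ℝ)) := continuous_id.prodMk continuous_const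
    have hmaps : Set.MapsTo (fun t : ℝ => ((t, y) : ℝ × ℝ)) (Set.Ico 0 t0) D := by
      intro t ht
      exact ⟨⟨ht.1, le_trans (le_of_lt ht.2) ht0T⟩, trivial⟩
    have hφ : ContinuousWithinAt (fun t => g (t, y)) (Set.Ico 0 t0) t0 := by
      have h7 := ContinuousWithinAt.comp (f := fun t : ℝ => ((t, y) : ℝ × ℝ)) (g := g)
        (s := Set.Ico 0 t0) (t := D) (x := t0) h1 h2.continuousWithinAt hmaps
      exact h7
    have hne : (𝓝[Set.Ico 0 t0] t0).NeBot := by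
      rw [← mem_closure_iff_nhdsWithin_neBot,
        closure_Ico (show (0:ℝ) ≠ t0 from ne_of_lt ht0pos)]
      exact ⟨ht0, le_refl _⟩
    have hev : ∀ᶠ t in 𝓝[Set.Ico 0 t0] t0, 0 < g (t, y) :=
      hφ.eventually (eventually_gt_nhds hy)
    obtain ⟨t2, h2a, h2b⟩ := (hev.and eventually_mem_nhdsWithin).exists
    have hmem2 : (t2, y) ∈ S :=
      ⟨⟨⟨h2b.1, le_trans (le_of_lt h2b.2) ht0T⟩, trivial⟩, le_of_lt h2a⟩
    exact absurd (hpmin' _ hmem2) (not_le.2 h2b.2)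
  have hgz : g (t0, x0) = 0 := le_antisymm (hslice x0) hg0
  -- bounds for u and W at (t0, x0)
  have hWv : 0 < Wfun A a c t0 x0 := Wfun_pos a c t0 x0 hA
  have hWub : Wfun A a c t0 x0 ≤ A * Real.exp (a * T) := by
    unfold Wfun
    have h1 : (x0 + c * t0) ^ 2 / (4 * (t0 + 1)) ≥ 0 := by positivity
    have h2 : Real.log (t0 + 1) ≥ 0 := Real.log_nonneg (by linarith)
    have h3 : a * t0 ≤ a * T := mul_le_mul_of_nonneg_left ht0T ha
    have h4 := Real.exp_le_exp.mpr (show a * t0 - (x0 + c * t0) ^ 2 / (4 * (t0 + 1))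
      - Real.log (t0 + 1) / 2 ≤ a * T by linarith)
    nlinarith [Real.exp_pos (a * T)]
  have huv0 : 0 ≤ u t0 x0 := hnonneg t0 ht0 x0
  have huvM : u t0 x0 ≤ M := hbdd t0 ht0 x0
  -- spatial maximum: derivatives
  have hEv : 0 < Real.exp (β * t0) := Real.exp_pos _
  have hCh : 0 < Real.cosh x0 := lt_of_lt_of_le one_pos (Real.one_le_cosh x0)
  have husm := hx_smooth t0 ht0pos
  have hudiff : Differentiable ℝ (fun y => u t0 y) := husm.differentiable two_ne_zero
  have hu'diff : Differentiable ℝ (deriv (fun y => u t0 y)) := contDiff_two_deriv_diff husm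
  have hWsm : ContDiff ℝ 2 (fun y => Wfun A a c t0 y) := by
    unfold Wfun
    apply contDiff_const.mul
    apply Real.contDiff_exp.comp
    exact (contDiff_const.sub (((contDiff_id.add contDiff_const).pow 2).div_const _)).sub
      contDiff_const
  have hcoshsm : ContDiff ℝ 2 (fun y : ℝ => δ * Real.exp (β * t0) * Real.cosh y) :=
    contDiff_const.mul Real.contDiff_cosh
  set Gm : ℝ → ℝ := fun y =>
    u t0 y - Wfun A a c t0 y - δ * Real.exp (β * t0) * Real.cosh y with hGmdef
  have hGsmooth : ContDiff ℝ 2 Gm := (husm.sub hWsm).sub hcoshsm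
  have hGmax : ∀ y, Gm y ≤ Gm x0 := by
    intro y
    have h1 : Gm y = g (t0, y) := rfl
    have h2 : Gm x0 = g (t0, x0) := rfl
    rw [h1, h2, hgz]
    exact hslice y
  have hGm_deriv : deriv Gm = fun y =>
      deriv (fun z => u t0 z) y - -(y + c * t0) / (2 * (t0 + 1)) * Wfun A a c t0 y
        - δ * Real.exp (β * t0) * Real.sinh y := by
    funext y
    have h1 : HasDerivAt (fun z => u t0 z) (deriv (fun z => u t0 z) y) y :=
      (hudiff y).hasDerivAt
    have h2 := Wfun_hasDerivAt_x A a c ht1p y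
    have h3 : HasDerivAt (fun z : ℝ => δ * Real.exp (β * t0) * Real.cosh z)
        (δ * Real.exp (β * t0) * Real.sinh y) y :=
      (Real.hasDerivAt_cosh y).const_mul _
    exact ((h1.sub h2).sub h3).deriv
  have hd1 : deriv Gm x0 = 0 :=
    IsLocalMax.deriv_eq_zero (Filter.Eventually.of_forall hGmax)
  have hd2 : deriv (deriv Gm) x0 ≤ 0 := deriv2_nonpos_of_max hGsmooth hGmax
  -- expand hd1
  have hF3 : deriv (fun z => u t0 z) x0 - -(x0 + c * t0) / (2 * (t0 + 1)) * Wfun A a c t0 x0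
      - δ * Real.exp (β * t0) * Real.sinh x0 = 0 := by
    have h5 := congrFun hGm_deriv x0
    rw [← h5, hd1]
  -- expand hd2
  have hF4 : deriv (deriv (fun z => u t0 z)) x0
      - ((x0 + c * t0) ^ 2 / (4 * (t0 + 1) ^ 2) - 1 / (2 * (t0 + 1))) * Wfun A a c t0 x0
      - δ * Real.exp (β * t0) * Real.cosh x0 ≤ 0 := by
    have heq : deriv (deriv Gm) x0 = deriv (deriv (fun z => u t0 z)) x0
        - ((x0 + c * t0) ^ 2 / (4 * (t0 + 1) ^ 2) - 1 / (2 * (t0 + 1))) * Wfun A a c t0 x0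
        - δ * Real.exp (β * t0) * Real.cosh x0 := by
      rw [hGm_deriv]
      have h1 : HasDerivAt (deriv (fun z => u t0 z))
          (deriv (deriv (fun z => u t0 z)) x0) x0 := (hu'diff x0).hasDerivAt
      have h2 := Wfun_hasDerivAt_xx A a c ht1p x0
      have h3 : HasDerivAt (fun z : ℝ => δ * Real.exp (β * t0) * Real.sinh z)
          (δ * Real.exp (β * t0) * Real.cosh x0) x0 :=
        (Real.hasDerivAt_sinh x0).const_mul _
      exact ((h1.sub h2).sub h3).deriv
    rw [← heq]
    exact hd2
  -- time derivative at t0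
  have hψ : HasDerivAt (fun t => g (t, x0))
      (deriv (fun τ => u τ x0) t0
        - (a - c * (x0 + c * t0) / (2 * (t0 + 1)) + (x0 + c * t0) ^ 2 / (4 * (t0 + 1) ^ 2)
            - 1 / (2 * (t0 + 1))) * Wfun A a c t0 x0
        - δ * (Real.exp (β * t0) * β) * Real.cosh x0) t0 := by
    have h1 : HasDerivAt (fun τ => u τ x0) (deriv (fun τ => u τ x0) t0) t0 :=
      (ht_diff t0 ht0pos x0).hasDerivAt
    have h2 := Wfun_hasDerivAt_t A a c ht1p x0
    have hexp : HasDerivAt (fun t : ℝ => Real.exp (β * t)) (Real.exp (β * t0) * β) t0 := by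
      have h6 := ((hasDerivAt_id t0).const_mul β).exp
      simpa using h6
    have h3 : HasDerivAt (fun t : ℝ => δ * Real.exp (β * t) * Real.cosh x0)
        (δ * (Real.exp (β * t0) * β) * Real.cosh x0) t0 :=
      ((hexp.const_mul δ).mul_const (Real.cosh x0))
    exact ((h1.sub h2).sub h3)
  have hψ0 : 0 ≤ deriv (fun τ => u τ x0) t0
      - (a - c * (x0 + c * t0) / (2 * (t0 + 1)) + (x0 + c * t0) ^ 2 / (4 * (t0 + 1) ^ 2)
          - 1 / (2 * (t0 + 1))) * Wfun A a c t0 x0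
      - δ * (Real.exp (β * t0) * β) * Real.cosh x0 := by
    apply deriv_nonneg_of_left_max hψ ht0pos
    intro t ht htlt
    have hg2 : g (t, x0) < 0 := by
      by_contra hgge
      push_neg at hgge
      have hmem3 : (t, x0) ∈ S :=
        ⟨⟨⟨ht, le_trans (le_of_lt htlt) ht0T⟩, trivial⟩, hgge⟩
      exact absurd (hpmin' _ hmem3) (not_le.2 htlt)
    have hgx0 : g (t0, x0) = (fun t => g (t, x0)) t0 := rfl
    calc (fun t => g (t, x0)) t = g (t, x0) := rfl
    _ ≤ (fun t => g (t, x0)) t0 := by rw [← hgx0, hgz]; exact le_of_lt hg2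
  -- the PDE at (t0, x0)
  have hF2 := hpde t0 ht0pos x0
  -- nonlinearity bounds
  have hval : u t0 x0 = Wfun A a c t0 x0 + δ * Real.exp (β * t0) * Real.cosh x0 := by
    simp only [hgdef] at hgz
    linarith
  have hRc : (0:ℝ) ≤ A * Real.exp (a * T) := by positivity
  have huIcc : u t0 x0 ∈ Set.Icc (-(M + A * Real.exp (a * T) + 1))
      (M + A * Real.exp (a * T) + 1) :=
    Set.mem_Icc.mpr ⟨by linarith, by linarith⟩
  have hWIcc : Wfun A a c t0 x0 ∈ Set.Icc (-(M + A * Real.exp (a * T) + 1))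
      (M + A * Real.exp (a * T) + 1) :=
    Set.mem_Icc.mpr ⟨by linarith, by linarith⟩
  have hF6 : f x0 (u t0 x0) - f x0 (Wfun A a c t0 x0)
      ≤ |K| * (δ * Real.exp (β * t0) * Real.cosh x0) := by
    have h1 := hK x0 _ huIcc _ hWIcc
    have h2 : |u t0 x0 - Wfun A a c t0 x0| = δ * Real.exp (β * t0) * Real.cosh x0 := by
      rw [hval, add_sub_cancel_left]
      exact abs_of_nonneg (by positivity)
    have h3 := le_abs_self (f x0 (u t0 x0) - f x0 (Wfun A a c t0 x0))
    have h4 : K * |u t0 x0 - Wfun A a c t0 x0| ≤ |K| * |u t0 x0 - Wfun A a c t0 x0| :=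
      mul_le_mul_of_nonneg_right (le_abs_self K) (abs_nonneg _)
    rw [h2] at h1 h4
    linarith
  have hF7 : f x0 (Wfun A a c t0 x0) ≤ a * Wfun A a c t0 x0 :=
    hlin x0 _ (le_of_lt hWv)
  have hF8 : c * (δ * Real.exp (β * t0) * Real.sinh x0)
      ≤ |c| * (δ * Real.exp (β * t0) * Real.cosh x0) := by
    have h1 := mul_sinh_le c x0
    have h2 : (0:ℝ) ≤ δ * Real.exp (β * t0) := by positivity
    have h3 := mul_le_mul_of_nonneg_left h1 h2
    linarith [h3]
  have hF9 : 0 < δ * Real.exp (β * t0) * Real.cosh x0 := by positivity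
  -- final contradiction
  rw [hF2] at hψ0
  have hc3 : c * (deriv (fun z => u t0 z) x0
      - -(x0 + c * t0) / (2 * (t0 + 1)) * Wfun A a c t0 x0
      - δ * Real.exp (β * t0) * Real.sinh x0) = 0 := by
    rw [hF3, mul_zero]
  have hβ' : δ * (Real.exp (β * t0) * β) * Real.cosh x0
      = |K| * (δ * Real.exp (β * t0) * Real.cosh x0)
        + |c| * (δ * Real.exp (β * t0) * Real.cosh x0)
        + 2 * (δ * Real.exp (β * t0) * Real.cosh x0) := by
    rw [hβ]
    ring
  rw [hβ'] at hψ0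
  ring_nf at hψ0 hc3 hF4 hF6 hF7 hF8 hF9
  linarith [hψ0, hc3, hF4, hF6, hF7, hF8, hF9]

set_option maxHeartbeats 2000000 in
/-- for `c ≤ -c_m`, the solution tends to `0` uniformly on
`{x ≤ -(c_m+c)t + x₀}`, and in particular uniformly on `{x ≤ x₀}`. -/

theorem leftward_decay (fm fb : ℝ → ℝ) (θ : ℝ) (L : ℝ) (f : ℝ → ℝ → ℝ) (c : ℝ)
    (u0 : ℝ → ℝ) (u : ℝ → ℝ → ℝ)
    (hfm : KPPHyp fm) (hfb : BistableHyp fb θ) (hf : HeterogHyp fm fb L f)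
    (hu : CauchyHyp f c u0 u)
    (hc : c ≤ -cm fm) :
    ∀ x₀ : ℝ,
      (∀ ε : ℝ, 0 < ε → ∃ T : ℝ, ∀ t : ℝ, T ≤ t → ∀ x : ℝ,
          x ≤ -(cm fm + c) * t + x₀ → u t x ≤ ε) ∧
      (∀ ε : ℝ, 0 < ε → ∃ T : ℝ, ∀ t : ℝ, T ≤ t → ∀ x : ℝ, x ≤ x₀ → u t x ≤ ε) := by
  have hLpos := hf.Lpos
  have hapos : 0 < deriv fm 0 := by
    have h1 := hfm.pos (1/2) (Set.mem_Ioo.mpr (by norm_num))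
    have h2 := hfm.le_lin (1/2) (Set.mem_Ioo.mpr (by norm_num))
    nlinarith
  have hl : 0 < Real.sqrt (deriv fm 0) := Real.sqrt_pos.2 hapos
  have hl2 : Real.sqrt (deriv fm 0) ^ 2 = deriv fm 0 := Real.sq_sqrt (le_of_lt hapos)
  have hcm : cm fm = 2 * Real.sqrt (deriv fm 0) := rfl
  have hlin : ∀ x s : ℝ, 0 ≤ s → f x s ≤ deriv fm 0 * s := by
    intro x s hs
    rcases eq_or_lt_of_le hs with h0 | h0
    · rw [← h0, hf.zero x, mul_zero]
    rcases lt_trichotomy s 1 with h1 | h1 | h1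
    · have hfm_le : fm s ≤ deriv fm 0 * s := hfm.le_lin s ⟨h0, h1⟩
      have hfxs : f x s ≤ fm s := by
        rcases le_or_gt x (-L) with hx | hx
        · exact le_of_eq (hf.eq_left x hx s hs)
        · have hmL : f (-L) s = fm s := hf.eq_left (-L) le_rfl s hs
          rcases le_or_gt x L with hx2 | hx2
          · have h3 := hf.mono s hs (Set.mem_Icc.mpr ⟨le_rfl, by linarith⟩)
              (Set.mem_Icc.mpr ⟨le_of_lt hx, hx2⟩) (le_of_lt hx)
            have h4 : f x s ≤ f (-L) s := h3
            rw [hmL] at h4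
            exact h4
          · have h2 : f x s = fb s := hf.eq_right x (le_of_lt hx2) s hs
            have h3 := hf.mono s hs (Set.mem_Icc.mpr ⟨le_rfl, by linarith⟩)
              (Set.mem_Icc.mpr ⟨by linarith, le_rfl⟩) (by linarith)
            have h4 : f L s ≤ f (-L) s := h3
            rw [hf.eq_right L le_rfl s hs, hmL] at h4
            rw [h2]
            exact h4
      linarith
    · subst h1
      rw [hf.one x]
      nlinarith
    · have h2 := hf.nonpos x s (le_of_lt h1)
      nlinarith
  obtain ⟨M, hMb⟩ := hu.bdd
  have hM0 : (0:ℝ) ≤ M := le_trans (hu.nonneg 0 le_rfl 0) (hMb 0 le_rfl 0)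
  obtain ⟨R, hRsupp⟩ : ∃ R : ℝ, ∀ x : ℝ, R < |x| → u0 x = 0 := by
    obtain ⟨r, hr⟩ := (hu.u0_cpt.isBounded).subset_closedBall 0
    refine ⟨r, fun x hx => ?_⟩
    apply image_eq_zero_of_notMem_tsupport
    intro hmem
    have h5 := hr hmem
    rw [Metric.mem_closedBall, Real.dist_eq, sub_zero] at h5
    linarith
  set A : ℝ := (M + 1) * Real.exp (R ^ 2 / 4) with hAdef
  have hApos : 0 < A := by positivity
  have hinitW : ∀ x, u 0 x ≤ Wfun A (deriv fm 0) c 0 x := by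
    intro x
    have harg : deriv fm 0 * 0 - (x + c * 0) ^ 2 / (4 * (0 + 1)) - Real.log (0 + 1) / 2
        = -(x ^ 2 / 4) := by
      norm_num
    have hWeq : Wfun A (deriv fm 0) c 0 x = A * Real.exp (-(x ^ 2 / 4)) := by
      unfold Wfun
      rw [harg]
    rw [hWeq, hu.init x]
    rcases le_or_gt |x| R with hx | hx
    · have h1 : u0 x ≤ M := by rw [← hu.init x]; exact hMb 0 le_rfl x
      have h2 : x ^ 2 ≤ R ^ 2 := by nlinarith [abs_nonneg x, sq_abs x]
      have h3 : A * Real.exp (-(x ^ 2 / 4)) = (M + 1) * Real.exp (R ^ 2 / 4 + -(x ^ 2 / 4)) := by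
        rw [hAdef, Real.exp_add]
        ring
      have h4 : (1:ℝ) ≤ Real.exp (R ^ 2 / 4 + -(x ^ 2 / 4)) := Real.one_le_exp (by linarith)
      nlinarith
    · rw [hRsupp x hx]
      positivity
  have hcomp : ∀ t, 0 ≤ t → ∀ x, u t x ≤ Wfun A (deriv fm 0) c t x := by
    intro t ht x
    obtain ⟨K, hK⟩ := hf.lip (M + A * Real.exp (deriv fm 0 * (t + 1)) + 1) (by positivity)
    exact comparison f c (deriv fm 0) A M (t + 1) K u (le_of_lt hapos) hApos hM0 hu.cont
      hu.t_diff hu.x_smooth hu.pde hu.nonneg hMb hlin hK hinitW t ht (by linarith) x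
  intro x₀
  have main : ∀ ε : ℝ, 0 < ε → ∃ T : ℝ, ∀ t : ℝ, T ≤ t → ∀ x : ℝ,
      x ≤ -(cm fm + c) * t + x₀ → u t x ≤ ε := by
    intro ε hε
    set C : ℝ := A * Real.exp (deriv fm 0 + Real.sqrt (deriv fm 0) * |x₀|) with hCdef
    have hCpos : 0 < C := by positivity
    refine ⟨max (max 1 (x₀ / (2 * Real.sqrt (deriv fm 0)))) ((C / ε) ^ 2), ?_⟩
    intro t ht x hx
    have ht1 : (1:ℝ) ≤ t := le_trans (le_trans (le_max_left _ _) (le_max_left _ _)) ht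
    have ht0 : (0:ℝ) ≤ t := by linarith
    have ht1p : (0:ℝ) < t + 1 := by linarith
    have htx0 : x₀ / (2 * Real.sqrt (deriv fm 0)) ≤ t :=
      le_trans (le_trans (le_max_right _ _) (le_max_left _ _)) ht
    have htC : (C / ε) ^ 2 ≤ t := le_trans (le_max_right _ _) ht
    have h2lt : x₀ ≤ 2 * Real.sqrt (deriv fm 0) * t := by
      rw [div_le_iff₀ (by positivity : (0:ℝ) < 2 * Real.sqrt (deriv fm 0))] at htx0
      linarith
    have hxle : x + c * t ≤ -(2 * Real.sqrt (deriv fm 0) * t - x₀) := by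
      rw [hcm] at hx
      linarith
    have hsq : (2 * Real.sqrt (deriv fm 0) * t - x₀) ^ 2 ≤ (x + c * t) ^ 2 := by
      have h1' : 0 ≤ -((x + c * t) + (2 * Real.sqrt (deriv fm 0) * t - x₀)) := by linarith
      have h2' : 0 ≤ (2 * Real.sqrt (deriv fm 0) * t - x₀) - (x + c * t) := by linarith
      nlinarith [mul_nonneg h1' h2']
    have hkey : deriv fm 0 * t - (x + c * t) ^ 2 / (4 * (t + 1))
        ≤ deriv fm 0 + Real.sqrt (deriv fm 0) * |x₀| := by
      have h4 : (deriv fm 0 * t - (deriv fm 0 + Real.sqrt (deriv fm 0) * |x₀|)) * (4 * (t + 1))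
          ≤ (x + c * t) ^ 2 := by
        have hlt2 : Real.sqrt (deriv fm 0) ^ 2 * t ^ 2 = deriv fm 0 * t ^ 2 := by rw [hl2]
        nlinarith [hsq, hl2, hlt2, le_abs_self x₀, abs_nonneg x₀, sq_nonneg x₀, hapos,
          mul_nonneg (mul_nonneg hl.le ht0) (sub_nonneg.2 (le_abs_self x₀)),
          mul_nonneg hl.le (abs_nonneg x₀)]
      have h5 : deriv fm 0 * t - (deriv fm 0 + Real.sqrt (deriv fm 0) * |x₀|)
          ≤ (x + c * t) ^ 2 / (4 * (t + 1)) := by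
        rw [le_div_iff₀ (by positivity : (0:ℝ) < 4 * (t + 1))]
        exact h4
      linarith
    have hlog0 : 0 ≤ Real.log (t + 1) := Real.log_nonneg (by linarith)
    have hWle : Wfun A (deriv fm 0) c t x ≤ C * Real.exp (-(Real.log (t + 1) / 2)) := by
      unfold Wfun
      have h6 : Real.exp (deriv fm 0 * t - (x + c * t) ^ 2 / (4 * (t + 1)) - Real.log (t + 1) / 2)
          ≤ Real.exp (deriv fm 0 + Real.sqrt (deriv fm 0) * |x₀| + -(Real.log (t + 1) / 2)) :=
        Real.exp_le_exp.mpr (by linarith)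
      have h7 := mul_le_mul_of_nonneg_left h6 (le_of_lt hApos)
      calc A * Real.exp (deriv fm 0 * t - (x + c * t) ^ 2 / (4 * (t + 1)) - Real.log (t + 1) / 2)
          ≤ A * Real.exp (deriv fm 0 + Real.sqrt (deriv fm 0) * |x₀| + -(Real.log (t + 1) / 2)) := h7
      _ = C * Real.exp (-(Real.log (t + 1) / 2)) := by
          rw [hCdef, Real.exp_add]
          ring
    have hsqrt : Real.exp (-(Real.log (t + 1) / 2)) = 1 / Real.sqrt (t + 1) := by
      rw [Real.sqrt_eq_rpow, Real.rpow_def_of_pos ht1p,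
        show -(Real.log (t + 1) / 2) = -(Real.log (t + 1) * (1/2)) by ring, Real.exp_neg]
      exact (one_div _).symm
    have hsqrtt : C / ε ≤ Real.sqrt (t + 1) := by
      have h7 : Real.sqrt ((C / ε) ^ 2) ≤ Real.sqrt (t + 1) := Real.sqrt_le_sqrt (by linarith)
      rwa [Real.sqrt_sq (by positivity : (0:ℝ) ≤ C / ε)] at h7
    have hsp : 0 < Real.sqrt (t + 1) := Real.sqrt_pos.2 ht1p
    have hfinal : C / Real.sqrt (t + 1) ≤ ε := by
      rw [div_le_iff₀ hsp]
      calc C = ε * (C / ε) := by field_simp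
      _ ≤ ε * Real.sqrt (t + 1) := mul_le_mul_of_nonneg_left hsqrtt (le_of_lt hε)
    calc u t x ≤ Wfun A (deriv fm 0) c t x := hcomp t ht0 x
    _ ≤ C * Real.exp (-(Real.log (t + 1) / 2)) := hWle
    _ = C / Real.sqrt (t + 1) := by rw [hsqrt]; ring
    _ ≤ ε := hfinal
  refine ⟨main, ?_⟩
  intro ε hε
  obtain ⟨T, hT⟩ := main ε hε
  refine ⟨max T 0, fun t ht x hx => hT t (le_trans (le_max_left _ _) ht) x ?_⟩
  have hcmc : cm fm + c ≤ 0 := by linarith [hc]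
  have ht0 : (0:ℝ) ≤ t := le_trans (le_max_right _ _) ht
  nlinarith [mul_nonneg (neg_nonneg.2 hcmc) ht0]
end
end
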